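/- For any function f, Z is conditionally independent of x given the pair (e(x), f(x)), where e(x) is the vector propensity score; in particular, P(Z_g = 1 | e(x), f(x)) = e_g(x) almost surely for each g. -/

import Mathlib

open MeasureTheory ProbabilityTheory

theorem stmt_14_aux {Ω : Type*} {mx m' : MeasurableSpace Ω}
    [mΩ : MeasurableSpace Ω] [StandardBorelSpace Ω]
    {X : Type*} [MeasurableSpace X]
    (μ : Measure Ω) [IsProbabilityMeasure μ]
    (G : ℕ) (Z : Fin G → Ω → ℝ) (x : Ω → X)
    (hZ01 : ∀ g ω, Z g ω = 0 ∨ Z g ω = 1)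
    (hZsum : ∀ ω, ∑ g, Z g ω = 1)
    (hZmeas : ∀ g, Measurable (Z g))
    (hmx : mx ≤ mΩ) (hms : m' ≤ mΩ) (hm'x : m' ≤ mx)
    (hxmx : Measurable[mx] x)
    (e : Ω → Fin G → ℝ)
    (he : ∀ g, (fun ω => e ω g) = μ[Z g|mx])
    (hem' : ∀ g, Measurable[m'] fun ω => e ω g) :
    CondIndepFun m' hms (fun ω g => Z g ω) x μ ∧
    ∀ g, μ[Z g|m'] =ᵐ[μ] fun ω => e ω g := by
  classical
  have hZ0 : ∀ g ω, 0 ≤ Z g ω := fun g ω => by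
    rcases hZ01 g ω with h | h <;> simp [h]
  have hZnorm : ∀ g ω, ‖Z g ω‖ ≤ 1 := fun g ω => by
    rcases hZ01 g ω with h | h <;> simp [h]
  have hZint : ∀ g, Integrable (Z g) μ := fun g =>
    (integrable_const (1 : ℝ)).mono' (hZmeas g).aestronglyMeasurable
      (Filter.Eventually.of_forall (hZnorm g))
  have heint : ∀ g, Integrable (fun ω => e ω g) μ := by
    intro g
    rw [he g]
    exact integrable_condExp
  have hebdd : ∀ g, ∀ᵐ ω ∂μ, ‖e ω g‖ ≤ 1 := by
    intro g
    have h0 : (0 : Ω → ℝ) ≤ᵐ[μ] μ[Z g|mx] :=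
      condExp_nonneg (Filter.Eventually.of_forall fun ω => hZ0 g ω)
    have h1 : μ[Z g|mx] ≤ᵐ[μ] μ[(fun _ => (1 : ℝ))|mx] :=
      condExp_mono (hZint g) (integrable_const 1)
        (Filter.Eventually.of_forall fun ω => by
          rcases hZ01 g ω with h | h <;> simp [h])
    rw [condExp_const hmx] at h1
    filter_upwards [h0, h1] with ω hω0 hω1
    have he' : e ω g = (μ[Z g|mx]) ω := by rw [← he g]
    rw [he', Real.norm_eq_abs, abs_le]
    have h0' : (0 : ℝ) ≤ (μ[Z g|mx]) ω := by simpa using hω0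
    exact ⟨by linarith, hω1⟩
  -- key pull-out lemma
  have key : ∀ (A : Set X), MeasurableSet A → ∀ g,
      μ[(fun ω => Z g ω * (x ⁻¹' A).indicator (fun _ => (1 : ℝ)) ω)|m'] =ᵐ[μ]
        fun ω => e ω g * (μ⟦x ⁻¹' A|m'⟧) ω := by
    intro A hA g
    have hA' : MeasurableSet[mx] (x ⁻¹' A) := hxmx hA
    set χ : Ω → ℝ := (x ⁻¹' A).indicator (fun _ => (1 : ℝ)) with hχ
    have hχsm : StronglyMeasurable[mx] χ := stronglyMeasurable_const.indicator hA'
    have hχint : Integrable χ μ := (integrable_const (1 : ℝ)).indicator (hmx _ hA')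
    have hχbd : ∀ ω, ‖χ ω‖ ≤ 1 := by
      intro ω
      rw [hχ]
      by_cases h : ω ∈ x ⁻¹' A <;> simp [Set.indicator_of_mem, Set.indicator_of_notMem, h]
    have step1 : μ[(fun ω => Z g ω * χ ω)|mx] =ᵐ[μ] fun ω => χ ω * e ω g := by
      have h1 : (fun ω => Z g ω * χ ω) = χ * Z g := by
        funext ω; simp [mul_comm]
      rw [h1]
      have h2 := condExp_stronglyMeasurable_mul_of_bound hmx hχsm (hZint g) 1
        (Filter.Eventually.of_forall hχbd)
      refine h2.trans ?_
      refine Filter.Eventually.of_forall fun ω => ?_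
      have he' : e ω g = (μ[Z g|mx]) ω := by rw [← he g]
      simp [he']
    have step2 : μ[(fun ω => Z g ω * χ ω)|m'] =ᵐ[μ] μ[(fun ω => χ ω * e ω g)|m'] := by
      refine ((condExp_condExp_of_le hm'x hmx).symm).trans ?_
      exact condExp_congr_ae step1
    have step3 : μ[(fun ω => χ ω * e ω g)|m'] =ᵐ[μ] fun ω => e ω g * (μ[χ|m']) ω := by
      have h1 : (fun ω => χ ω * e ω g) = (fun ω => e ω g) * χ := by
        funext ω; simp [mul_comm]
      rw [h1]
      exact condExp_stronglyMeasurable_mul_of_bound hms (hem' g).stronglyMeasurable hχint 1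
        (hebdd g)
    exact step2.trans step3
  -- pointwise structure of Z
  have hpoint : ∀ ω, ∃ g₀, ∀ g, Z g ω = if g = g₀ then 1 else 0 := by
    intro ω
    have hex' : ∃ g₀, Z g₀ ω = 1 := by
      by_contra h
      push_neg at h
      have hz : ∀ g ∈ Finset.univ, Z g ω = 0 := fun g _ => (hZ01 g ω).resolve_right (h g)
      have := hZsum ω
      rw [Finset.sum_eq_zero hz] at this
      norm_num at this
    obtain ⟨g₀, hg₀⟩ := hex'
    refine ⟨g₀, fun g => ?_⟩
    rcases eq_or_ne g g₀ with rfl | hg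
    · simp [hg₀]
    · simp only [hg, if_false]
      by_contra h
      have h1 : Z g ω = 1 := (hZ01 g ω).resolve_left h
      have hsub : ({g, g₀} : Finset (Fin G)) ⊆ Finset.univ := Finset.subset_univ _
      have hle := Finset.sum_le_sum_of_subset_of_nonneg hsub
        (fun i _ _ => hZ0 i ω)
      rw [Finset.sum_pair hg, h1, hg₀, hZsum ω] at hle
      linarith
  set T : Set (Fin G → ℝ) → Finset (Fin G) :=
    fun S => Finset.univ.filter (fun g => Pi.single g (1 : ℝ) ∈ S) with hT
  -- indicator identity
  have hindid : ∀ (S : Set (Fin G → ℝ)) (A : Set X) ω,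
      Set.indicator ((fun ω g => Z g ω) ⁻¹' S ∩ x ⁻¹' A) (fun _ => (1 : ℝ)) ω
        = ∑ g ∈ T S, Z g ω * (x ⁻¹' A).indicator (fun _ => (1 : ℝ)) ω := by
    intro S A ω
    obtain ⟨g₀, hg₀⟩ := hpoint ω
    have hfun : (fun g => Z g ω) = Pi.single g₀ (1 : ℝ) := by
      funext g; rw [hg₀ g, Pi.single_apply]
    have hsumT : ∑ g ∈ T S, Z g ω = if g₀ ∈ T S then 1 else 0 := by
      calc ∑ g ∈ T S, Z g ω = ∑ g ∈ T S, if g = g₀ then (1:ℝ) else 0 :=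
            Finset.sum_congr rfl fun g _ => hg₀ g
        _ = if g₀ ∈ T S then 1 else 0 := Finset.sum_ite_eq' (T S) g₀ (fun _ => 1)
    have hmem : ω ∈ (fun ω g => Z g ω) ⁻¹' S ↔ g₀ ∈ T S := by
      simp only [Set.mem_preimage, hfun, hT, Finset.mem_filter, Finset.mem_univ, true_and]
    rw [← Finset.sum_mul, hsumT]
    by_cases h1 : ω ∈ (fun ω g => Z g ω) ⁻¹' S <;> by_cases h2 : ω ∈ x ⁻¹' A
    · rw [Set.indicator_of_mem (Set.mem_inter h1 h2), Set.indicator_of_mem h2, if_pos (hmem.mp h1)]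
      ring
    · rw [Set.indicator_of_notMem (fun hc => h2 hc.2), Set.indicator_of_notMem h2]
      ring
    · rw [Set.indicator_of_notMem (fun hc => h1 hc.1), Set.indicator_of_mem h2,
        if_neg (fun hc => h1 (hmem.mpr hc))]
      ring
    · rw [Set.indicator_of_notMem (fun hc => h2 hc.2), Set.indicator_of_notMem h2]
      ring
  -- main computation
  have hmain : ∀ (S : Set (Fin G → ℝ)), ∀ (A : Set X), MeasurableSet A →
      (μ⟦(fun ω g => Z g ω) ⁻¹' S ∩ x ⁻¹' A|m'⟧) =ᵐ[μ]
        fun ω => (∑ g ∈ T S, e ω g) * (μ⟦x ⁻¹' A|m'⟧) ω := by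
    intro S A hA
    have hA' : MeasurableSet (x ⁻¹' A) := hmx _ (hxmx hA)
    have heq : (Set.indicator ((fun ω g => Z g ω) ⁻¹' S ∩ x ⁻¹' A) (fun _ => (1 : ℝ)))
        = fun ω => ∑ g ∈ T S, Z g ω * (x ⁻¹' A).indicator (fun _ => (1 : ℝ)) ω :=
      funext (hindid S A)
    have hterm_int : ∀ g ∈ T S,
        Integrable (fun ω => Z g ω * (x ⁻¹' A).indicator (fun _ => (1 : ℝ)) ω) μ := by
      intro g _
      refine (integrable_const (1 : ℝ)).mono'
        (((hZmeas g).mul (measurable_const.indicator hA')).aestronglyMeasurable) ?_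
      refine Filter.Eventually.of_forall fun ω => ?_
      rw [norm_mul]
      have h1 : ‖(x ⁻¹' A).indicator (fun _ => (1:ℝ)) ω‖ ≤ 1 := by
        by_cases h : ω ∈ x ⁻¹' A <;> simp [Set.indicator_of_mem, Set.indicator_of_notMem, h]
      calc ‖Z g ω‖ * ‖(x ⁻¹' A).indicator (fun _ => (1:ℝ)) ω‖
          ≤ 1 * 1 := mul_le_mul (hZnorm g ω) h1 (norm_nonneg _) zero_le_one
        _ = 1 := by ring
    calc (μ⟦(fun ω g => Z g ω) ⁻¹' S ∩ x ⁻¹' A|m'⟧)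
        = μ[(fun ω => ∑ g ∈ T S, Z g ω * (x ⁻¹' A).indicator (fun _ => (1 : ℝ)) ω)|m'] := by
          rw [heq]
      _ =ᵐ[μ] ∑ g ∈ T S,
            μ[(fun ω => Z g ω * (x ⁻¹' A).indicator (fun _ => (1 : ℝ)) ω)|m'] := by
          have h1 : (fun ω => ∑ g ∈ T S, Z g ω * (x ⁻¹' A).indicator (fun _ => (1 : ℝ)) ω)
              = ∑ g ∈ T S, (fun ω => Z g ω * (x ⁻¹' A).indicator (fun _ => (1 : ℝ)) ω) := by
            funext ω; simp
          rw [h1]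
          exact condExp_finset_sum hterm_int m'
      _ =ᵐ[μ] fun ω => (∑ g ∈ T S, e ω g) * (μ⟦x ⁻¹' A|m'⟧) ω := by
          have hae : ∀ᵐ ω ∂μ, ∀ g, g ∈ T S →
              (μ[(fun ω => Z g ω * (x ⁻¹' A).indicator (fun _ => (1 : ℝ)) ω)|m']) ω
                = e ω g * (μ⟦x ⁻¹' A|m'⟧) ω := by
            rw [ae_all_iff]
            intro g
            have := key A hA g
            filter_upwards [this] with ω hω _
            exact hω
          filter_upwards [hae] with ω hω
          rw [Finset.sum_apply]
          rw [Finset.sum_congr rfl hω, ← Finset.sum_mul]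
  have hone : (μ⟦(Set.univ : Set Ω)|m'⟧) = fun _ => (1 : ℝ) := by
    rw [Set.indicator_univ]
    exact condExp_const hms 1
  have hZS : ∀ (S : Set (Fin G → ℝ)),
      (μ⟦(fun ω g => Z g ω) ⁻¹' S|m'⟧) =ᵐ[μ] fun ω => ∑ g ∈ T S, e ω g := by
    intro S
    have h := hmain S Set.univ MeasurableSet.univ
    rw [Set.preimage_univ, Set.inter_univ, hone] at h
    simpa using h
  constructor
  · rw [condIndepFun_iff_condExp_inter_preimage_eq_mul (measurable_pi_lambda _ hZmeas) (hxmx.mono hmx le_rfl)]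
    intro S A hS hA
    refine (hmain S A hA).trans ?_
    filter_upwards [hZS S] with ω hω
    rw [hω]
  · intro g
    have ht := condExp_condExp_of_le (μ := μ) (f := Z g) hm'x hmx
    have hfix : μ[(fun ω => e ω g)|m'] = fun ω => e ω g :=
      condExp_of_stronglyMeasurable hms (hem' g).stronglyMeasurable (heint g)
    calc μ[Z g|m'] =ᵐ[μ] μ[μ[Z g|mx]|m'] := ht.symm
      _ = μ[(fun ω => e ω g)|m'] := by rw [he g]
      _ = fun ω => e ω g := hfix

/-- For any function `f` of the covariates, `Z` is conditionally independent
of `x` given the pair `(e(x), f(x))`, where `e` is the vector propensity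
score; in particular `P(Z g = 1 | e(x), f(x)) = e g (x)` almost surely. -/
theorem stmt_14
    {Ω : Type*} [MeasurableSpace Ω] [StandardBorelSpace Ω]
    {X : Type*} [MeasurableSpace X] {Y : Type*} [MeasurableSpace Y]
    (μ : Measure Ω) [IsProbabilityMeasure μ]
    (G : ℕ) (Z : Fin G → Ω → ℝ) (x : Ω → X) (f : X → Y)
    (hZ01 : ∀ g ω, Z g ω = 0 ∨ Z g ω = 1)
    (hZsum : ∀ ω, ∑ g, Z g ω = 1)
    (hZmeas : ∀ g, Measurable (Z g))
    (hx : Measurable x) (hf : Measurable f)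
    -- the vector propensity score e, with e ω g = P(Z g = 1 | x) (ω)
    (e : Ω → Fin G → ℝ)
    (he : e = fun ω g => (μ[Z g | MeasurableSpace.comap x inferInstance]) ω)
    -- s(ω) = (e(ω), f(x(ω)))
    (s : Ω → (Fin G → ℝ) × Y)
    (hs : s = fun ω => (e ω, f (x ω)))
    (hms : MeasurableSpace.comap s inferInstance ≤ (inferInstance : MeasurableSpace Ω)) :
    CondIndepFun (MeasurableSpace.comap s inferInstance) hms
      (fun ω g => Z g ω) x μ ∧
    ∀ g, μ[Z g | MeasurableSpace.comap s inferInstance] =ᵐ[μ] fun ω => e ω g := by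
  have he' : ∀ g, (fun ω => e ω g)
      = μ[Z g | MeasurableSpace.comap x inferInstance] := by
    intro g; funext ω; rw [he]
  have hxmx : Measurable[MeasurableSpace.comap x inferInstance] x :=
    measurable_iff_comap_le.mpr le_rfl
  have hsmx : Measurable[MeasurableSpace.comap x inferInstance] s := by
    have hpi : ∀ (m : MeasurableSpace Ω),
        (∀ g, Measurable[m] fun ω => e ω g) → Measurable[m] e :=
      fun m hm => measurable_pi_lambda _ hm
    rw [hs]
    refine Measurable.prodMk ?_ (hf.comp hxmx)
    refine hpi _ fun g => ?_
    have h1 : Measurable[MeasurableSpace.comap x inferInstance]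
        (μ[Z g | MeasurableSpace.comap x inferInstance]) :=
      stronglyMeasurable_condExp.measurable
    exact (he' g) ▸ h1
  have hm'x : MeasurableSpace.comap s inferInstance
      ≤ MeasurableSpace.comap x inferInstance := measurable_iff_comap_le.mp hsmx
  have hem' : ∀ g, Measurable[MeasurableSpace.comap s inferInstance] fun ω => e ω g := by
    intro g
    have hsm' : Measurable[MeasurableSpace.comap s inferInstance] s := comap_measurable s
    have h2 : Measurable[MeasurableSpace.comap s inferInstance] fun ω => (s ω).1 g :=
      ((measurable_pi_apply g).comp measurable_fst).comp hsm'
    simpa [hs] using h2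
  exact stmt_14_aux μ G Z x hZ01 hZsum hZmeas hx.comap_le hms hm'x hxmx e he' hem'
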